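/- Fix an integer N > 1. Every KdV subset S can be transformed to the KdV subset S^∅ = ℤ≥0 = {0,1,2,…} by a finite sequence of mutations: there exist m ≥ 0 and KdV subsets S = T₀, T₁, …, T_m = ℤ≥0 such that for each l < m, T_{l+1} = T_l[a] for some element a of the leading term of T_l. -/

import Mathlib

/-- A subset `S ⊆ ℤ` is of virtual cardinal zero if both `S \ ℤ≥0` and `ℤ≥0 \ S`
are finite and have the same cardinality. -/
def VirtualCardZero (S : Set ℤ) : Prop :=
  (S \ {n : ℤ | 0 ≤ n}).Finite ∧ ({n : ℤ | 0 ≤ n} \ S).Finite ∧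
    (S \ {n : ℤ | 0 ≤ n}).ncard = ({n : ℤ | 0 ≤ n} \ S).ncard

/-- The shift `S + k = {s + k : s ∈ S}` of a set of integers. -/
def shiftSet (S : Set ℤ) (k : ℤ) : Set ℤ := (fun s => s + k) '' S

/-- A KdV subset (for a fixed `N`): a subset `S ⊆ ℤ` of virtual cardinal zero
such that `S + N ⊆ S`. -/
def IsKdV (N : ℕ) (S : Set ℤ) : Prop :=
  VirtualCardZero S ∧ shiftSet S N ⊆ S

/-- `A` is the leading term of the KdV subset `S`: `A` is an `N`-element set with
`S = A ∪ (S+N)` and `A ∩ (S+N) = ∅`. -/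
def IsLeadingTerm (N : ℕ) (S : Set ℤ) (A : Finset ℤ) : Prop :=
  A.card = N ∧ (↑A : Set ℤ) ∪ shiftSet S N = S ∧ (↑A : Set ℤ) ∩ shiftSet S N = ∅

/-- The mutation `S[a] = {a+1−N} ∪ (S+1)` of a KdV subset `S` at an element `a`
of its leading term. -/
def mutate (N : ℕ) (S : Set ℤ) (a : ℤ) : Set ℤ :=
  {a + 1 - (N : ℤ)} ∪ shiftSet S 1

namespace KdVAux

/-- The set generated by a finset of "leading" elements. -/
def SA (N : ℕ) (A : Finset ℤ) : Set ℤ := {x | ∃ a ∈ A, ∃ k : ℕ, x = a + (N : ℤ) * k}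

/-- The invariant carried along through mutations. -/
def Inv (N : ℕ) (A : Finset ℤ) : Prop :=
  A.card = N ∧ (∀ a ∈ A, ∀ b ∈ A, a % (N:ℤ) = b % (N:ℤ) → a = b) ∧
    ∑ a ∈ A, a = ∑ x ∈ Finset.Ico (0:ℤ) (N:ℤ), x

lemma gauss (n : ℕ) : 2 * ∑ x ∈ Finset.Ico (0:ℤ) (n:ℤ), x = (n:ℤ) * ((n:ℤ) - 1) := by
  induction n with
  | zero => simp
  | succ n ih =>
    have h : Finset.Ico (0:ℤ) ((n:ℤ)+1) = insert (n:ℤ) (Finset.Ico (0:ℤ) (n:ℤ)) := by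
      ext x
      simp only [Finset.mem_Ico, Finset.mem_insert]
      omega
    push_cast
    rw [h, Finset.sum_insert (by simp)]
    push_cast at ih
    ring_nf
    ring_nf at ih
    linarith

lemma mem_SA_iff {N : ℕ} (hN : 0 < N) {A : Finset ℤ} {x : ℤ} :
    x ∈ SA N A ↔ ∃ a ∈ A, a ≤ x ∧ x % (N:ℤ) = a % (N:ℤ) := by
  have hNz : (0:ℤ) < (N:ℤ) := by exact_mod_cast hN
  constructor
  · rintro ⟨a, ha, k, rfl⟩
    refine ⟨a, ha, ?_, ?_⟩
    · nlinarith [Int.natCast_nonneg k]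
    · simp [Int.add_mul_emod_self_left]
  · rintro ⟨a, ha, hle, hmod⟩
    have hdvd : (N:ℤ) ∣ x - a := by
      have : x ≡ a [ZMOD (N:ℤ)] := hmod
      simpa using (Int.ModEq.dvd this.symm)
    obtain ⟨m, hm⟩ := hdvd
    have hm0 : 0 ≤ m := by nlinarith
    refine ⟨a, ha, m.toNat, ?_⟩
    rw [Int.toNat_of_nonneg hm0]
    omega

lemma resSum {N : ℕ} (hN : 0 < N) {A : Finset ℤ} (hcard : A.card = N)
    (hinj : ∀ a ∈ A, ∀ b ∈ A, a % (N:ℤ) = b % (N:ℤ) → a = b) :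
    ∑ a ∈ A, a % (N:ℤ) = ∑ x ∈ Finset.Ico (0:ℤ) (N:ℤ), x := by
  have hNz : (0:ℤ) < (N:ℤ) := by exact_mod_cast hN
  have hNne : (N:ℤ) ≠ 0 := by exact_mod_cast hN.ne'
  have hsub : A.image (· % (N:ℤ)) ⊆ Finset.Ico (0:ℤ) (N:ℤ) := by
    intro x hx
    simp only [Finset.mem_image] at hx
    obtain ⟨a, _, rfl⟩ := hx
    simp only [Finset.mem_Ico]
    exact ⟨Int.emod_nonneg a hNne, Int.emod_lt_of_pos a hNz⟩
  have hcardim : (A.image (· % (N:ℤ))).card = N := by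
    rw [Finset.card_image_of_injOn (fun a ha b hb h => hinj a ha b hb h), hcard]
  have heq : A.image (· % (N:ℤ)) = Finset.Ico (0:ℤ) (N:ℤ) := by
    apply Finset.eq_of_subset_of_card_le hsub
    rw [hcardim, Int.card_Ico]; simp
  calc ∑ a ∈ A, a % (N:ℤ) = ∑ x ∈ A.image (· % (N:ℤ)), x := by
        rw [Finset.sum_image (fun a ha b hb h => hinj a ha b hb h)]
    _ = _ := by rw [heq]

/-- `∑ a / N = 0` given the invariant. -/
lemma qsum_eq_zero {N : ℕ} (hN : 0 < N) {A : Finset ℤ} (h : Inv N A) :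
    ∑ a ∈ A, a / (N:ℤ) = 0 := by
  have hNz : (0:ℤ) < (N:ℤ) := by exact_mod_cast hN
  obtain ⟨hcard, hinj, hsum⟩ := h
  have hres := resSum hN hcard hinj
  have hdecomp : ∑ a ∈ A, a = (N:ℤ) * (∑ a ∈ A, a / (N:ℤ)) + ∑ a ∈ A, a % (N:ℤ) := by
    rw [Finset.mul_sum, ← Finset.sum_add_distrib]
    exact (Finset.sum_congr rfl (fun a _ => (Int.mul_ediv_add_emod a (N:ℤ)).symm))
  rw [hsum, hres] at hdecomp
  have : (N:ℤ) * (∑ a ∈ A, a / (N:ℤ)) = 0 := by linarith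
  exact (mul_eq_zero.mp this).resolve_left hNz.ne'

/-- Negative elements of the class of `a`. -/
def fneg (N : ℕ) (a : ℤ) : Finset ℤ :=
  (Finset.range (-(a / (N:ℤ))).toNat).image (fun k : ℕ => a + (N:ℤ) * (k:ℤ))

/-- Nonnegative elements below `a` in the class of `a`. -/
def fpos (N : ℕ) (a : ℤ) : Finset ℤ :=
  (Finset.range ((a / (N:ℤ))).toNat).image (fun k : ℕ => a - (N:ℤ) * ((k:ℤ)+1))

lemma neg_iff {N : ℕ} (hN : 0 < N) {r : ℤ} (hr : 0 ≤ r) (hr2 : r < (N:ℤ)) (s : ℤ) :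
    (N:ℤ) * s + r < 0 ↔ s < 0 := by
  have hNz : (0:ℤ) < (N:ℤ) := by exact_mod_cast hN
  constructor
  · intro h
    by_contra hs
    push_neg at hs
    nlinarith
  · intro h
    have : s ≤ -1 := by omega
    nlinarith

lemma mem_fneg {N : ℕ} (hN : 0 < N) {a x : ℤ} :
    x ∈ fneg N a ↔ (x < 0 ∧ a ≤ x ∧ x % (N:ℤ) = a % (N:ℤ)) := by
  have hNz : (0:ℤ) < (N:ℤ) := by exact_mod_cast hN
  have hNne : (N:ℤ) ≠ 0 := hNz.ne'
  have hqr : (N:ℤ) * (a / (N:ℤ)) + a % (N:ℤ) = a := Int.mul_ediv_add_emod a (N:ℤ)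
  have hr0 : 0 ≤ a % (N:ℤ) := Int.emod_nonneg a hNne
  have hr1 : a % (N:ℤ) < (N:ℤ) := Int.emod_lt_of_pos a hNz
  constructor
  · intro hx
    simp only [fneg, Finset.mem_image, Finset.mem_range] at hx
    obtain ⟨k, hk, rfl⟩ := hx
    have hk' : (k:ℤ) < -(a / (N:ℤ)) := Int.lt_toNat.mp hk
    refine ⟨?_, ?_, ?_⟩
    · have : a + (N:ℤ)*k = (N:ℤ) * (a/(N:ℤ) + k) + a % (N:ℤ) := by linarith [hqr]; 
      rw [this, neg_iff hN hr0 hr1]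
      omega
    · nlinarith [Int.natCast_nonneg k]
    · simp [Int.add_mul_emod_self_left]
  · rintro ⟨hneg, hle, hmod⟩
    have hdvd : (N:ℤ) ∣ x - a := by
      have : x ≡ a [ZMOD (N:ℤ)] := hmod
      simpa using (Int.ModEq.dvd this.symm)
    obtain ⟨m, hm⟩ := hdvd
    have hm0 : 0 ≤ m := by nlinarith
    have hxeq : x = (N:ℤ) * (a/(N:ℤ) + m) + a % (N:ℤ) := by linarith [hqr]
    have hqm : a/(N:ℤ) + m < 0 := by
      rw [hxeq, neg_iff hN hr0 hr1] at hneg; exact hneg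
    simp only [fneg, Finset.mem_image, Finset.mem_range]
    refine ⟨m.toNat, by omega, ?_⟩
    rw [Int.toNat_of_nonneg hm0]
    linarith [hm]

lemma mem_fpos {N : ℕ} (hN : 0 < N) {a x : ℤ} :
    x ∈ fpos N a ↔ (0 ≤ x ∧ x < a ∧ x % (N:ℤ) = a % (N:ℤ)) := by
  have hNz : (0:ℤ) < (N:ℤ) := by exact_mod_cast hN
  have hNne : (N:ℤ) ≠ 0 := hNz.ne'
  have hqr : (N:ℤ) * (a / (N:ℤ)) + a % (N:ℤ) = a := Int.mul_ediv_add_emod a (N:ℤ)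
  have hr0 : 0 ≤ a % (N:ℤ) := Int.emod_nonneg a hNne
  have hr1 : a % (N:ℤ) < (N:ℤ) := Int.emod_lt_of_pos a hNz
  constructor
  · intro hx
    simp only [fpos, Finset.mem_image, Finset.mem_range] at hx
    obtain ⟨k, hk, rfl⟩ := hx
    have hk' : (k:ℤ) < a / (N:ℤ) := Int.lt_toNat.mp hk
    refine ⟨?_, ?_, ?_⟩
    · have heq : a - (N:ℤ)*((k:ℤ)+1) = (N:ℤ) * (a/(N:ℤ) - (k+1)) + a % (N:ℤ) := by
        linarith [hqr]
      rw [heq]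
      have h1 : 0 ≤ a/(N:ℤ) - ((k:ℤ)+1) := by omega
      nlinarith
    · nlinarith [Int.natCast_nonneg k]
    · have : a - (N:ℤ)*((k:ℤ)+1) = a + (N:ℤ) * (-(k+1)) := by ring
      rw [this]; simp [Int.add_mul_emod_self_left]
  · rintro ⟨hge, hlt, hmod⟩
    have hdvd : (N:ℤ) ∣ a - x := by
      have : x ≡ a [ZMOD (N:ℤ)] := hmod
      simpa using (Int.ModEq.dvd this)
    obtain ⟨m, hm⟩ := hdvd
    have hm1 : 1 ≤ m := by nlinarith
    have hxeq : x = (N:ℤ) * (a/(N:ℤ) - m) + a % (N:ℤ) := by linarith [hqr]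
    have hqm : 0 ≤ a/(N:ℤ) - m := by
      by_contra hc
      push_neg at hc
      have : x < 0 := by rw [hxeq, neg_iff hN hr0 hr1]; omega
      omega
    simp only [fpos, Finset.mem_image, Finset.mem_range]
    refine ⟨(m-1).toNat, by omega, ?_⟩
    rw [Int.toNat_of_nonneg (by omega : (0:ℤ) ≤ m - 1)]
    have : (N:ℤ) * (m - 1 + 1) = (N:ℤ) * m := by ring
    rw [this]
    linarith [hm]

lemma coe_biUnion_fneg {N : ℕ} (hN : 0 < N) (A : Finset ℤ) :
    ↑(A.biUnion (fneg N)) = SA N A \ {n : ℤ | 0 ≤ n} := by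
  ext x
  simp only [Finset.coe_biUnion, Set.mem_iUnion, Finset.mem_coe, Set.mem_diff,
    Set.mem_setOf_eq, mem_SA_iff hN]
  constructor
  · rintro ⟨a, ha, hx⟩
    rw [mem_fneg hN] at hx
    exact ⟨⟨a, ha, hx.2.1, hx.2.2⟩, by omega⟩
  · rintro ⟨⟨a, ha, hle, hmod⟩, hneg⟩
    exact ⟨a, ha, (mem_fneg hN).mpr ⟨by omega, hle, hmod⟩⟩

lemma coe_biUnion_fpos {N : ℕ} (hN : 0 < N) {A : Finset ℤ} (hcard : A.card = N)
    (hinj : ∀ a ∈ A, ∀ b ∈ A, a % (N:ℤ) = b % (N:ℤ) → a = b) :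
    ↑(A.biUnion (fpos N)) = {n : ℤ | 0 ≤ n} \ SA N A := by
  have hNz : (0:ℤ) < (N:ℤ) := by exact_mod_cast hN
  have hNne : (N:ℤ) ≠ 0 := hNz.ne'
  -- completeness of residues
  have hcomp : ∀ x : ℤ, ∃ a ∈ A, a % (N:ℤ) = x % (N:ℤ) := by
    intro x
    have hsub : A.image (· % (N:ℤ)) ⊆ Finset.Ico (0:ℤ) (N:ℤ) := by
      intro y hy
      simp only [Finset.mem_image] at hy
      obtain ⟨a, _, rfl⟩ := hy
      simp only [Finset.mem_Ico]
      exact ⟨Int.emod_nonneg a hNne, Int.emod_lt_of_pos a hNz⟩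
    have hcardim : (A.image (· % (N:ℤ))).card = N := by
      rw [Finset.card_image_of_injOn (fun a ha b hb h => hinj a ha b hb h), hcard]
    have heq : A.image (· % (N:ℤ)) = Finset.Ico (0:ℤ) (N:ℤ) := by
      apply Finset.eq_of_subset_of_card_le hsub
      rw [hcardim, Int.card_Ico]; simp
    have hx : x % (N:ℤ) ∈ Finset.Ico (0:ℤ) (N:ℤ) :=
      Finset.mem_Ico.mpr ⟨Int.emod_nonneg x hNne, Int.emod_lt_of_pos x hNz⟩
    rw [← heq] at hx
    simp only [Finset.mem_image] at hx
    obtain ⟨a, ha, h⟩ := hx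
    exact ⟨a, ha, h⟩
  ext x
  simp only [Finset.coe_biUnion, Set.mem_iUnion, Finset.mem_coe, Set.mem_diff,
    Set.mem_setOf_eq, mem_SA_iff hN]
  constructor
  · rintro ⟨a, ha, hx⟩
    rw [mem_fpos hN] at hx
    obtain ⟨hge, hlt, hmod⟩ := hx
    refine ⟨hge, ?_⟩
    rintro ⟨b, hb, hble, hbmod⟩
    have : b = a := hinj b hb a ha (by rw [← hbmod, hmod])
    omega
  · rintro ⟨hge, hnot⟩
    obtain ⟨a, ha, hmod⟩ := hcomp x
    refine ⟨a, ha, (mem_fpos hN).mpr ⟨hge, ?_, hmod.symm⟩⟩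
    by_contra hc
    push_neg at hc
    exact hnot ⟨a, ha, hc, hmod.symm⟩

lemma card_biUnion_fneg {N : ℕ} (hN : 0 < N) {A : Finset ℤ}
    (hinj : ∀ a ∈ A, ∀ b ∈ A, a % (N:ℤ) = b % (N:ℤ) → a = b) :
    (A.biUnion (fneg N)).card = ∑ a ∈ A, (-(a / (N:ℤ))).toNat := by
  have hNz : (0:ℤ) < (N:ℤ) := by exact_mod_cast hN
  rw [Finset.card_biUnion]
  · refine Finset.sum_congr rfl (fun a _ => ?_)
    rw [fneg, Finset.card_image_of_injective _ (fun k₁ k₂ h => by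
      have h' : (N:ℤ) * (k₁:ℤ) = (N:ℤ) * (k₂:ℤ) := by linarith
      exact_mod_cast mul_left_cancel₀ hNz.ne' h'), Finset.card_range]
  · intro a ha b hb hab
    rw [Function.onFun, Finset.disjoint_left]
    intro x hxa hxb
    rw [mem_fneg hN] at hxa hxb
    exact hab (hinj a ha b hb (by rw [← hxa.2.2, hxb.2.2]))

lemma card_biUnion_fpos {N : ℕ} (hN : 0 < N) {A : Finset ℤ}
    (hinj : ∀ a ∈ A, ∀ b ∈ A, a % (N:ℤ) = b % (N:ℤ) → a = b) :
    (A.biUnion (fpos N)).card = ∑ a ∈ A, ((a / (N:ℤ))).toNat := by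
  have hNz : (0:ℤ) < (N:ℤ) := by exact_mod_cast hN
  rw [Finset.card_biUnion]
  · refine Finset.sum_congr rfl (fun a _ => ?_)
    rw [fpos, Finset.card_image_of_injective _ (fun k₁ k₂ h => by
      have h' : (N:ℤ) * ((k₁:ℤ)+1) = (N:ℤ) * ((k₂:ℤ)+1) := by linarith
      have h'' := mul_left_cancel₀ hNz.ne' h'
      have : (k₁:ℤ) = (k₂:ℤ) := by linarith
      exact_mod_cast this), Finset.card_range]
  · intro a ha b hb hab
    rw [Function.onFun, Finset.disjoint_left]
    intro x hxa hxb
    rw [mem_fpos hN] at hxa hxb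
    exact hab (hinj a ha b hb (by rw [← hxa.2.2, hxb.2.2]))

lemma vcz_iff {N : ℕ} (hN : 0 < N) {A : Finset ℤ} (hcard : A.card = N)
    (hinj : ∀ a ∈ A, ∀ b ∈ A, a % (N:ℤ) = b % (N:ℤ) → a = b) :
    VirtualCardZero (SA N A) ↔ ∑ a ∈ A, a / (N:ℤ) = 0 := by
  have h1 : SA N A \ {n : ℤ | 0 ≤ n} = ↑(A.biUnion (fneg N)) := (coe_biUnion_fneg hN A).symm
  have h2 : {n : ℤ | 0 ≤ n} \ SA N A = ↑(A.biUnion (fpos N)) := (coe_biUnion_fpos hN hcard hinj).symm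
  have key : (∑ a ∈ A, (-(a / (N:ℤ))).toNat = ∑ a ∈ A, ((a / (N:ℤ))).toNat)
      ↔ ∑ a ∈ A, a / (N:ℤ) = 0 := by
    have hsplit : ∑ a ∈ A, a / (N:ℤ) =
        (↑(∑ a ∈ A, ((a / (N:ℤ))).toNat) : ℤ) - ↑(∑ a ∈ A, (-(a / (N:ℤ))).toNat) := by
      push_cast
      rw [← Finset.sum_sub_distrib]
      exact Finset.sum_congr rfl (fun a _ => (Int.toNat_sub_toNat_neg (a / (N:ℤ))).symm)
    constructor
    · intro h; rw [hsplit, h]; ring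
    · intro h
      rw [hsplit] at h
      have : (↑(∑ a ∈ A, ((a / (N:ℤ))).toNat) : ℤ) = ↑(∑ a ∈ A, (-(a / (N:ℤ))).toNat) := by
        linarith
      exact_mod_cast this.symm
  constructor
  · rintro ⟨-, -, hc⟩
    rw [h1, h2, Set.ncard_coe_finset, Set.ncard_coe_finset,
      card_biUnion_fneg hN hinj, card_biUnion_fpos hN hinj] at hc
    exact key.mp hc
  · intro h
    refine ⟨by rw [h1]; exact Finset.finite_toSet _, by rw [h2]; exact Finset.finite_toSet _, ?_⟩
    rw [h1, h2, Set.ncard_coe_finset, Set.ncard_coe_finset,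
      card_biUnion_fneg hN hinj, card_biUnion_fpos hN hinj]
    exact key.mpr h

lemma shift_SA_subset {N : ℕ} (A : Finset ℤ) : shiftSet (SA N A) (N:ℤ) ⊆ SA N A := by
  rintro x ⟨y, ⟨a, ha, k, rfl⟩, rfl⟩
  exact ⟨a, ha, k + 1, by push_cast; ring⟩

lemma isKdV_of_inv {N : ℕ} (hN : 0 < N) {A : Finset ℤ} (h : Inv N A) : IsKdV N (SA N A) :=
  ⟨(vcz_iff hN h.1 h.2.1).mpr (qsum_eq_zero hN h), shift_SA_subset A⟩

lemma leading_of_inv {N : ℕ} (hN : 0 < N) {A : Finset ℤ} (h : Inv N A) :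
    IsLeadingTerm N (SA N A) A := by
  have hNz : (0:ℤ) < (N:ℤ) := by exact_mod_cast hN
  obtain ⟨hcard, hinj, -⟩ := h
  have hshift : ∀ x : ℤ, x ∈ shiftSet (SA N A) (N:ℤ) ↔ ∃ a ∈ A, ∃ k : ℕ, x = a + (N:ℤ) * (k+1) := by
    intro x
    constructor
    · rintro ⟨y, ⟨a, ha, k, rfl⟩, rfl⟩
      exact ⟨a, ha, k, by push_cast; ring⟩
    · rintro ⟨a, ha, k, rfl⟩
      exact ⟨a + (N:ℤ)*k, ⟨a, ha, k, rfl⟩, by push_cast; ring⟩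
  refine ⟨hcard, ?_, ?_⟩
  · ext x
    simp only [Set.mem_union, Finset.mem_coe, hshift]
    constructor
    · rintro (hx | ⟨a, ha, k, rfl⟩)
      · exact ⟨x, hx, 0, by simp⟩
      · exact ⟨a, ha, k+1, by push_cast; ring⟩
    · rintro ⟨a, ha, k, rfl⟩
      cases k with
      | zero => left; simpa using ha
      | succ k => right; exact ⟨a, ha, k, by push_cast; ring⟩
  · ext x
    simp only [Set.mem_inter_iff, Finset.mem_coe, hshift, Set.mem_empty_iff_false, iff_false]
    rintro ⟨hx, a, ha, k, rfl⟩
    have : a + (N:ℤ)*(k+1) = a := by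
      refine hinj _ hx a ha ?_
      simp [Int.add_mul_emod_self_left]
    nlinarith [Int.natCast_nonneg k]

/-- The mutated leading set. -/
def mutA (N : ℕ) (A : Finset ℤ) (M : ℤ) : Finset ℤ :=
  insert (M + 1 - (N:ℤ)) ((A.image (· + 1)).erase (M + 1))

lemma mutate_eq {N : ℕ} (hN : 0 < N) {A : Finset ℤ} {M : ℤ} (hM : M ∈ A) :
    mutate N (SA N A) M = SA N (mutA N A M) := by
  have hNz : (0:ℤ) < (N:ℤ) := by exact_mod_cast hN
  have hshift : shiftSet (SA N A) 1 = SA N (A.image (· + 1)) := by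
    ext x
    constructor
    · rintro ⟨y, ⟨a, ha, k, rfl⟩, rfl⟩
      exact ⟨a + 1, Finset.mem_image_of_mem _ ha, k, by ring⟩
    · rintro ⟨b, hb, k, rfl⟩
      simp only [Finset.mem_image] at hb
      obtain ⟨a, ha, rfl⟩ := hb
      exact ⟨a + (N:ℤ)*k, ⟨a, ha, k, rfl⟩, by ring⟩
  rw [mutate, hshift]
  ext x
  simp only [Set.mem_union, Set.mem_singleton_iff, SA, Set.mem_setOf_eq, mutA,
    Finset.mem_insert, Finset.mem_erase, Finset.mem_image]
  constructor
  · rintro (rfl | ⟨b, hb, k, rfl⟩)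
    · exact ⟨M + 1 - (N:ℤ), Or.inl rfl, 0, by ring⟩
    · by_cases hbM : b = M + 1
      · subst hbM
        exact ⟨M + 1 - (N:ℤ), Or.inl rfl, k + 1, by push_cast; ring⟩
      · exact ⟨b, Or.inr ⟨hbM, hb⟩, k, rfl⟩
  · rintro ⟨b, hb, k, rfl⟩
    rcases hb with rfl | ⟨hbM, hb⟩
    · cases k with
      | zero => left; simp
      | succ k =>
        right
        exact ⟨M + 1, ⟨M, hM, rfl⟩, k, by push_cast; ring⟩
    · right
      exact ⟨b, hb, k, rfl⟩

lemma inv_mutA {N : ℕ} (hN : 0 < N) {A : Finset ℤ} (h : Inv N A) {M : ℤ} (hM : M ∈ A) :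
    Inv N (mutA N A M) := by
  have hNz : (0:ℤ) < (N:ℤ) := by exact_mod_cast hN
  obtain ⟨hcard, hinj, hsum⟩ := h
  have hinj1 : Function.Injective (· + 1 : ℤ → ℤ) := fun a b h => by simpa using h
  have hM1 : M + 1 ∈ A.image (· + 1) := Finset.mem_image_of_mem _ hM
  have hnotmem : M + 1 - (N:ℤ) ∉ (A.image (· + 1)).erase (M + 1) := by
    intro hc
    rw [Finset.mem_erase, Finset.mem_image] at hc
    obtain ⟨hne, a, ha, haeq⟩ := hc
    have haM : a = M - (N:ℤ) := by linarith
    have : a = M := hinj a ha M hM (by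
      subst haM
      have : M - (N:ℤ) = M + (N:ℤ)*(-1) := by ring
      rw [this]
      simp [Int.add_mul_emod_self_left])
    omega
  constructor
  · rw [mutA, Finset.card_insert_of_notMem hnotmem, Finset.card_erase_of_mem hM1,
      Finset.card_image_of_injective _ hinj1, hcard]
    omega
  constructor
  · -- injectivity of residues
    have hmem : ∀ x ∈ mutA N A M, ∃ a ∈ A, x % (N:ℤ) = (a+1) % (N:ℤ) ∧
        ((x = M + 1 - (N:ℤ) ∧ a = M) ∨ (x = a + 1 ∧ a ≠ M)) := by
      intro x hx
      rw [mutA, Finset.mem_insert, Finset.mem_erase, Finset.mem_image] at hx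
      rcases hx with rfl | ⟨hne, a, ha, rfl⟩
      · refine ⟨M, hM, ?_, Or.inl ⟨rfl, rfl⟩⟩
        have : M + 1 - (N:ℤ) = (M+1) + (N:ℤ)*(-1) := by ring
        rw [this]
        simp [Int.add_mul_emod_self_left]
      · exact ⟨a, ha, rfl, Or.inr ⟨rfl, fun hc => hne (by rw [hc])⟩⟩
    intro x hx y hy hxy
    obtain ⟨a, ha, hamod, hacase⟩ := hmem x hx
    obtain ⟨b, hb, hbmod, hbcase⟩ := hmem y hy
    have hab : a = b := by
      apply hinj a ha b hb
      have : (a+1) % (N:ℤ) = (b+1) % (N:ℤ) := by rw [← hamod, ← hbmod, hxy]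
      have h2 : (a+1) ≡ (b+1) [ZMOD (N:ℤ)] := this
      have h3 := Int.ModEq.sub_right 1 h2
      exact (by simpa using h3 : a ≡ b [ZMOD (N:ℤ)])
    subst hab
    rcases hacase with ⟨rfl, rfl⟩ | ⟨rfl, hane⟩ <;>
      rcases hbcase with ⟨hy1, hy2⟩ | ⟨hy1, hy2⟩ <;> omega
  · -- sum
    rw [mutA, Finset.sum_insert hnotmem, ← hsum]
    have herase : ∑ x ∈ (A.image (· + 1)).erase (M + 1), x
        = (∑ x ∈ A.image (· + 1), x) - (M + 1) := by
      rw [← Finset.sum_erase_add _ _ hM1]; ring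
    rw [herase, Finset.sum_image (fun a _ b _ h => hinj1 h)]
    rw [Finset.sum_add_distrib]
    simp only [Finset.sum_const, hcard, nsmul_eq_mul, mul_one]
    ring

/-- Sum of squares measure. -/
def Phi (A : Finset ℤ) : ℤ := ∑ a ∈ A, a ^ 2

lemma phi_nonneg (A : Finset ℤ) : 0 ≤ Phi A :=
  Finset.sum_nonneg (fun a _ => sq_nonneg a)

lemma phi_mutA {N : ℕ} (hN : 0 < N) {A : Finset ℤ} (h : Inv N A) {M : ℤ} (hM : M ∈ A) :
    Phi (mutA N A M) = Phi A + 2 * (N:ℤ) * ((N:ℤ) - 1 - M) := by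
  have hNz : (0:ℤ) < (N:ℤ) := by exact_mod_cast hN
  obtain ⟨hcard, hinj, hsum⟩ := h
  have hinj1 : Function.Injective (· + 1 : ℤ → ℤ) := fun a b h => by simpa using h
  have hM1 : M + 1 ∈ A.image (· + 1) := Finset.mem_image_of_mem _ hM
  have hnotmem : M + 1 - (N:ℤ) ∉ (A.image (· + 1)).erase (M + 1) := by
    intro hc
    rw [Finset.mem_erase, Finset.mem_image] at hc
    obtain ⟨hne, a, ha, haeq⟩ := hc
    have haM : a = M - (N:ℤ) := by linarith
    have : a = M := hinj a ha M hM (by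
      subst haM
      have : M - (N:ℤ) = M + (N:ℤ)*(-1) := by ring
      rw [this]
      simp [Int.add_mul_emod_self_left])
    omega
  have h2sum : 2 * ∑ a ∈ A, a = (N:ℤ) * ((N:ℤ) - 1) := by
    rw [hsum]; exact gauss N
  rw [Phi, mutA, Finset.sum_insert hnotmem]
  have herase : ∑ x ∈ (A.image (· + 1)).erase (M + 1), x ^ 2
      = (∑ x ∈ A.image (· + 1), x ^ 2) - (M + 1) ^ 2 := by
    rw [← Finset.sum_erase_add _ _ hM1]; ring
  rw [herase, Finset.sum_image (fun a _ b _ h => hinj1 h)]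
  have hexp : ∑ a ∈ A, (a + 1) ^ 2 = Phi A + 2 * ∑ a ∈ A, a + A.card := by
    have hterm : ∀ a : ℤ, (a+1)^2 = a^2 + 2*a + 1 := fun a => by ring
    simp_rw [hterm]
    rw [Finset.sum_add_distrib, Finset.sum_add_distrib, Finset.sum_const, Finset.mul_sum,
      Phi]
    simp [mul_comm]
  rw [hexp, hcard]
  linear_combination h2sum

lemma final_ident {N : ℕ} (hN : 0 < N) {A : Finset ℤ} (h : Inv N A)
    (hle : ∀ a ∈ A, a ≤ (N:ℤ) - 1) : A = Finset.Ico (0:ℤ) (N:ℤ) := by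
  have hNz : (0:ℤ) < (N:ℤ) := by exact_mod_cast hN
  have hNne : (N:ℤ) ≠ 0 := hNz.ne'
  obtain ⟨hcard, hinj, hsum⟩ := h
  have hqzero : ∑ a ∈ A, a / (N:ℤ) = 0 := qsum_eq_zero hN ⟨hcard, hinj, hsum⟩
  have hqle : ∀ a ∈ A, a / (N:ℤ) ≤ 0 := by
    intro a ha
    by_contra hc
    push_neg at hc
    have h1 : 1 ≤ a / (N:ℤ) := hc
    have hqr : (N:ℤ) * (a / (N:ℤ)) + a % (N:ℤ) = a := Int.mul_ediv_add_emod a (N:ℤ)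
    have hr0 : 0 ≤ a % (N:ℤ) := Int.emod_nonneg a hNne
    have := hle a ha
    nlinarith
  have hqall : ∀ a ∈ A, a / (N:ℤ) = 0 :=
    (Finset.sum_eq_zero_iff_of_nonpos hqle).mp hqzero
  have hfix : ∀ a ∈ A, a % (N:ℤ) = a := by
    intro a ha
    have hqr : (N:ℤ) * (a / (N:ℤ)) + a % (N:ℤ) = a := Int.mul_ediv_add_emod a (N:ℤ)
    rw [hqall a ha] at hqr
    linarith
  have himg : A.image (· % (N:ℤ)) = A := by
    apply Finset.image_congr (g := id) ?_ |>.trans (Finset.image_id)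
    intro a ha
    exact hfix a ha
  have hsub : A ⊆ Finset.Ico (0:ℤ) (N:ℤ) := by
    intro a ha
    rw [← hfix a ha]
    exact Finset.mem_Ico.mpr ⟨Int.emod_nonneg a hNne, Int.emod_lt_of_pos a hNz⟩
  apply Finset.eq_of_subset_of_card_le hsub
  rw [Int.card_Ico, hcard]
  simp

lemma SA_Ico {N : ℕ} (hN : 0 < N) : SA N (Finset.Ico (0:ℤ) (N:ℤ)) = {n : ℤ | 0 ≤ n} := by
  have hNz : (0:ℤ) < (N:ℤ) := by exact_mod_cast hN
  have hNne : (N:ℤ) ≠ 0 := hNz.ne'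
  ext x
  rw [Set.mem_setOf_eq, mem_SA_iff hN]
  constructor
  · rintro ⟨a, ha, hle, -⟩
    rw [Finset.mem_Ico] at ha
    omega
  · intro hx
    refine ⟨x % (N:ℤ), Finset.mem_Ico.mpr ⟨Int.emod_nonneg x hNne, Int.emod_lt_of_pos x hNz⟩, ?_, ?_⟩
    · have hqr : (N:ℤ) * (x / (N:ℤ)) + x % (N:ℤ) = x := Int.mul_ediv_add_emod x (N:ℤ)
      have : 0 ≤ x / (N:ℤ) := Int.ediv_nonneg hx hNz.le
      nlinarith
    · rw [Int.emod_emod_of_dvd x dvd_rfl]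

lemma inv_Ico {N : ℕ} (hN : 0 < N) : Inv N (Finset.Ico (0:ℤ) (N:ℤ)) := by
  have hNz : (0:ℤ) < (N:ℤ) := by exact_mod_cast hN
  refine ⟨by rw [Int.card_Ico]; simp, ?_, rfl⟩
  intro a ha b hb hab
  rw [Finset.mem_Ico] at ha hb
  rwa [Int.emod_eq_of_lt ha.1 ha.2, Int.emod_eq_of_lt hb.1 hb.2] at hab

lemma reach {N : ℕ} (hN : 1 < N) : ∀ n (A : Finset ℤ), (Phi A).toNat ≤ n → Inv N A →
    ∃ (m : ℕ) (T : ℕ → Set ℤ), T 0 = SA N A ∧ T m = {n : ℤ | 0 ≤ n} ∧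
      (∀ l ≤ m, IsKdV N (T l)) ∧
      ∀ l < m, ∃ (B : Finset ℤ) (a : ℤ),
        IsLeadingTerm N (T l) B ∧ a ∈ B ∧ T (l + 1) = mutate N (T l) a := by
  have hN0 : 0 < N := by omega
  intro n
  induction n using Nat.strong_induction_on with
  | _ n ih =>
    intro A hphi hInv
    by_cases hsmall : ∀ a ∈ A, a ≤ (N:ℤ) - 1
    · have hA : A = Finset.Ico 0 (N:ℤ) := final_ident hN0 hInv hsmall
      subst hA
      refine ⟨0, fun _ => {n : ℤ | 0 ≤ n}, by rw [SA_Ico hN0], rfl, ?_, by omega⟩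
      intro l _
      have h := isKdV_of_inv hN0 (inv_Ico (N := N) hN0)
      rwa [SA_Ico hN0] at h
    · push_neg at hsmall
      obtain ⟨a₀, ha₀, ha₀big⟩ := hsmall
      have hne : A.Nonempty := ⟨a₀, ha₀⟩
      have hM : A.max' hne ∈ A := A.max'_mem hne
      set M := A.max' hne with hMdef
      have hMbig : (N:ℤ) - 1 < M := lt_of_lt_of_le ha₀big (A.le_max' _ ha₀)
      have hInv' : Inv N (mutA N A M) := inv_mutA hN0 hInv hM
      have hphilt : Phi (mutA N A M) < Phi A := by
        rw [phi_mutA hN0 hInv hM]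
        have hNz : (0:ℤ) < (N:ℤ) := by exact_mod_cast hN0
        nlinarith
      have hlt : (Phi (mutA N A M)).toNat < n := by
        have h1 := phi_nonneg A
        have h2 := phi_nonneg (mutA N A M)
        omega
      obtain ⟨m, T', hT0, hTm, hKdV, hstep⟩ :=
        ih _ hlt (mutA N A M) (le_refl _) hInv'
      refine ⟨m + 1, fun l => Nat.casesOn l (SA N A) (fun l' => T' l'), rfl, hTm, ?_, ?_⟩
      · intro l hl
        cases l with
        | zero => exact isKdV_of_inv hN0 hInv
        | succ l => exact hKdV l (by omega)
      · intro l hl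
        cases l with
        | zero =>
          refine ⟨A, M, leading_of_inv hN0 hInv, hM, ?_⟩
          show T' 0 = mutate N (SA N A) M
          rw [hT0, mutate_eq hN0 hM]
        | succ l =>
          obtain ⟨B, a, hB, ha, hmut⟩ := hstep l (by omega)
          exact ⟨B, a, hB, ha, hmut⟩

lemma exists_A {N : ℕ} (hN : 1 < N) {S : Set ℤ} (hS : IsKdV N S) :
    ∃ A : Finset ℤ, Inv N A ∧ S = SA N A := by
  have hN0 : 0 < N := by omega
  have hNz : (0:ℤ) < (N:ℤ) := by exact_mod_cast hN0
  have hNne : (N:ℤ) ≠ 0 := hNz.ne'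
  obtain ⟨⟨hfin1, hfin2, hcardeq⟩, hshift⟩ := hS
  have hiter : ∀ x ∈ S, ∀ k : ℕ, x + (N:ℤ) * (k:ℤ) ∈ S := by
    intro x hx k
    induction k with
    | zero => simpa using hx
    | succ k ihk =>
      have h1 : x + (N:ℤ)*(k:ℤ) + (N:ℤ) ∈ S := hshift ⟨x + (N:ℤ)*(k:ℤ), ihk, rfl⟩
      have heq : x + (N:ℤ)*((k:ℤ)+1) = x + (N:ℤ)*(k:ℤ) + (N:ℤ) := by ring
      push_cast
      rw [heq]
      exact h1
  have hbddS : BddBelow S := by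
    have h1 : BddBelow (S \ {n : ℤ | 0 ≤ n}) := Set.Finite.bddBelow hfin1
    have h2 : BddBelow ({n : ℤ | 0 ≤ n}) := ⟨0, fun x hx => hx⟩
    have hsub : S ⊆ (S \ {n : ℤ | 0 ≤ n}) ∪ {n : ℤ | 0 ≤ n} := by
      intro x hx
      by_cases h : (0:ℤ) ≤ x
      · exact Or.inr h
      · exact Or.inl ⟨hx, h⟩
    exact BddBelow.mono hsub (h1.union h2)
  obtain ⟨b, hb⟩ := hbddS
  obtain ⟨c, hc⟩ := Set.Finite.bddAbove hfin2
  have hclassne : ∀ r : ℤ, 0 ≤ r → r < (N:ℤ) → ∃ x, x ∈ S ∧ x % (N:ℤ) = r := by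
    intro r hr0 hr1
    set t : ℤ := max c 0 + 1 with htdef
    have ht : 0 < t := by
      have := le_max_right c 0
      omega
    set x := r + (N:ℤ) * t with hxdef
    have hx0 : 0 ≤ x := by nlinarith
    have hxc : c < x := by
      have hct : c < t := by
        have := le_max_left c 0
        omega
      nlinarith
    have hxS : x ∈ S := by
      by_contra hxS
      have hmem : x ∈ {n : ℤ | 0 ≤ n} \ S := ⟨hx0, hxS⟩
      have := hc hmem
      omega
    refine ⟨x, hxS, ?_⟩
    rw [hxdef, Int.add_mul_emod_self_left, Int.emod_eq_of_lt hr0 hr1]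
  have hleast : ∀ r : ℤ, ∃ m : ℤ, 0 ≤ r → r < (N:ℤ) →
      (m ∈ S ∧ m % (N:ℤ) = r) ∧ ∀ y ∈ S, y % (N:ℤ) = r → m ≤ y := by
    intro r
    by_cases h : 0 ≤ r ∧ r < (N:ℤ)
    · obtain ⟨x, hx⟩ := hclassne r h.1 h.2
      obtain ⟨lb, hlb1, hlb2⟩ := Int.exists_least_of_bdd
        (P := fun z => z ∈ S ∧ z % (N:ℤ) = r) ⟨b, fun z hz => hb hz.1⟩ ⟨x, hx⟩
      exact ⟨lb, fun _ _ => ⟨hlb1, fun y hy hyr => hlb2 y ⟨hy, hyr⟩⟩⟩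
    · exact ⟨0, fun h1 h2 => absurd ⟨h1, h2⟩ h⟩
  choose f hf using hleast
  set A := (Finset.Ico (0:ℤ) (N:ℤ)).image f with hAdef
  have hfmem : ∀ r ∈ Finset.Ico (0:ℤ) (N:ℤ), f r ∈ S ∧ f r % (N:ℤ) = r := by
    intro r hr
    rw [Finset.mem_Ico] at hr
    exact (hf r hr.1 hr.2).1
  have hfleast : ∀ r ∈ Finset.Ico (0:ℤ) (N:ℤ), ∀ y ∈ S, y % (N:ℤ) = r → f r ≤ y := by
    intro r hr
    rw [Finset.mem_Ico] at hr
    exact (hf r hr.1 hr.2).2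
  have hAmemS : ∀ a ∈ A, a ∈ S := by
    intro a ha
    rw [hAdef, Finset.mem_image] at ha
    obtain ⟨r, hr, rfl⟩ := ha
    exact (hfmem r hr).1
  have hAinj : ∀ a ∈ A, ∀ b' ∈ A, a % (N:ℤ) = b' % (N:ℤ) → a = b' := by
    intro a ha b' hb' hab
    rw [hAdef, Finset.mem_image] at ha hb'
    obtain ⟨r, hr, rfl⟩ := ha
    obtain ⟨r', hr', rfl⟩ := hb'
    rw [(hfmem r hr).2, (hfmem r' hr').2] at hab
    rw [hab]
  have hcard : A.card = N := by
    rw [hAdef, Finset.card_image_of_injOn, Int.card_Ico]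
    · simp
    · intro r hr r' hr' h
      have h1 := (hfmem r hr).2
      have h2 := (hfmem r' hr').2
      rw [← h1, ← h2, h]
  have hSA : S = SA N A := by
    apply Set.Subset.antisymm
    · intro x hx
      rw [mem_SA_iff hN0]
      have hr : x % (N:ℤ) ∈ Finset.Ico (0:ℤ) (N:ℤ) :=
        Finset.mem_Ico.mpr ⟨Int.emod_nonneg x hNne, Int.emod_lt_of_pos x hNz⟩
      refine ⟨f (x % (N:ℤ)), Finset.mem_image_of_mem f hr,
        hfleast _ hr x hx rfl, ?_⟩
      rw [(hfmem _ hr).2]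
    · rintro x ⟨a, ha, k, rfl⟩
      exact hiter a (hAmemS a ha) k
  have hvcz : VirtualCardZero (SA N A) := by
    rw [← hSA]
    exact ⟨hfin1, hfin2, hcardeq⟩
  have hq : ∑ a ∈ A, a / (N:ℤ) = 0 := (vcz_iff hN0 hcard hAinj).mp hvcz
  have hsum : ∑ a ∈ A, a = ∑ x ∈ Finset.Ico (0:ℤ) (N:ℤ), x := by
    have hdecomp : ∑ a ∈ A, a = (N:ℤ) * (∑ a ∈ A, a / (N:ℤ)) + ∑ a ∈ A, a % (N:ℤ) := by
      rw [Finset.mul_sum, ← Finset.sum_add_distrib]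
      exact Finset.sum_congr rfl (fun a _ => (Int.mul_ediv_add_emod a (N:ℤ)).symm)
    rw [hdecomp, hq, resSum hN0 hcard hAinj]
    ring
  exact ⟨A, ⟨hcard, hAinj, hsum⟩, hSA⟩

end KdVAux

/-- Fix `N > 1`.  Every KdV subset `S` can be transformed to the KdV
subset `S^∅ = ℤ≥0` by a finite sequence of mutations: there are `m ≥ 0` and KdV subsets
`S = T₀, T₁, …, T_m = ℤ≥0` such that for each `l < m`, `T_{l+1} = T_l[a]` for some
element `a` of the leading term of `T_l`. -/
theorem kdv_mutations_reach_trivial (N : ℕ) (hN : 1 < N) (S : Set ℤ) (hS : IsKdV N S) :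
    ∃ (m : ℕ) (T : ℕ → Set ℤ), T 0 = S ∧ T m = {n : ℤ | 0 ≤ n} ∧
      (∀ l ≤ m, IsKdV N (T l)) ∧
      ∀ l < m, ∃ (A : Finset ℤ) (a : ℤ),
        IsLeadingTerm N (T l) A ∧ a ∈ A ∧ T (l + 1) = mutate N (T l) a := by
  obtain ⟨A, hInv, hSA⟩ := KdVAux.exists_A hN hS
  obtain ⟨m, T, hT0, hTm, hKdV, hstep⟩ :=
    KdVAux.reach hN (KdVAux.Phi A).toNat A (le_refl _) hInv
  exact ⟨m, T, by rw [hT0, hSA], hTm, hKdV, hstep⟩
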